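/- A monic real polynomial f of degree 4 is the characteristic polynomial of some derivation of the filiform Lie algebra n₄ if and only if there exist real numbers a and e such that f = (X − a)(X − e)(X − (a + e))(X − (2a + e)). -/

import Mathlib

set_option linter.unusedTactic false
set_option linter.unnecessarySeqFocus false
set_option linter.unreachableTactic false

open Polynomial

/-- The 4-dimensional filiform Lie algebra `n₄`: the real vector space `Fin 4 → ℝ` with
basis `e₁, e₂, e₃, e₄` and only nonzero brackets `⁅e₁, e₂⁆ = e₃` and `⁅e₁, e₃⁆ = e₄`. -/
def N4 : Type := Fin 4 → ℝ

noncomputable instance : AddCommGroup N4 := Pi.addCommGroup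
noncomputable instance : Module ℝ N4 := Pi.module _ _ _
instance : FiniteDimensional ℝ N4 := inferInstanceAs (FiniteDimensional ℝ (Fin 4 → ℝ))

lemma N4.add_apply (x y : N4) (i : Fin 4) : (x + y) i = x i + y i := rfl
lemma N4.smul_apply (r : ℝ) (x : N4) (i : Fin 4) : (r • x) i = r * x i := rfl

noncomputable instance : LieRing N4 :=
  { (inferInstance : AddCommGroup N4) with
    bracket := fun x y => ![0, 0, x 0 * y 1 - x 1 * y 0, x 0 * y 2 - x 2 * y 0]
    add_lie := by
      intro x y z
      show (![_,_,_,_] : Fin 4 → ℝ) = ![_,_,_,_] + ![_,_,_,_]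
      funext i
      change _ = (_ : Fin 4 → ℝ) i + (_ : Fin 4 → ℝ) i
      fin_cases i <;> simp [N4.add_apply] <;> ring
    lie_add := by
      intro x y z
      show (![_,_,_,_] : Fin 4 → ℝ) = ![_,_,_,_] + ![_,_,_,_]
      funext i
      change _ = (_ : Fin 4 → ℝ) i + (_ : Fin 4 → ℝ) i
      fin_cases i <;> simp [N4.add_apply] <;> ring
    lie_self := by
      intro x
      show (![_,_,_,_] : Fin 4 → ℝ) = 0
      funext i
      fin_cases i <;> simp <;> ring
    leibniz_lie := by
      intro x y z
      show (![_,_,_,_] : Fin 4 → ℝ) = ![_,_,_,_] + ![_,_,_,_]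
      funext i
      change _ = (_ : Fin 4 → ℝ) i + (_ : Fin 4 → ℝ) i
      fin_cases i <;> simp [N4.add_apply] <;> ring }

noncomputable instance : LieAlgebra ℝ N4 :=
  { lie_smul := by
      intro r x y
      show (![_,_,_,_] : Fin 4 → ℝ) = r • ![_,_,_,_]
      funext i
      change _ = r * (_ : Fin 4 → ℝ) i
      fin_cases i <;> simp [N4.smul_apply] <;> ring }

private lemma charpoly_lower (M : Matrix (Fin 4) (Fin 4) ℝ)
    (h01 : M 0 1 = 0) (h02 : M 0 2 = 0) (h03 : M 0 3 = 0)
    (h12 : M 1 2 = 0) (h13 : M 1 3 = 0) (h23 : M 2 3 = 0) :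
    M.charpoly = (X - C (M 0 0)) * (X - C (M 1 1)) * (X - C (M 2 2)) * (X - C (M 3 3)) := by
  have hlt : M.BlockTriangular OrderDual.toDual := by
    intro i j h
    simp only [OrderDual.toDual_lt_toDual] at h
    fin_cases i <;> fin_cases j <;> simp_all
  rw [Matrix.charpoly, Matrix.det_of_lowerTriangular _ hlt.charmatrix]
  simp [Fin.prod_univ_four]

lemma N4.bracket_def (x y : N4) :
    ⁅x, y⁆ = ![0, 0, x 0 * y 1 - x 1 * y 0, x 0 * y 2 - x 2 * y 0] := rfl

lemma N4.sub_apply (x y : N4) (i : Fin 4) : (x - y) i = x i - y i := rfl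

/-- the standard basis of `N4` -/
noncomputable def N4basis : Module.Basis (Fin 4) ℝ N4 := Pi.basisFun ℝ (Fin 4)

/-- the standard basis vectors of `N4` -/
noncomputable def E (j : Fin 4) : N4 := Pi.single j 1

lemma E_apply (j i : Fin 4) : E j i = if i = j then 1 else 0 := Pi.single_apply j 1 i

lemma N4.single_bracket01 : ⁅E 0, E 1⁆ = E 2 := by
  rw [N4.bracket_def]; funext i; fin_cases i <;> simp [E_apply]
lemma N4.single_bracket02 : ⁅E 0, E 2⁆ = E 3 := by
  rw [N4.bracket_def]; funext i; fin_cases i <;> simp [E_apply]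
lemma N4.single_bracket12 : ⁅E 1, E 2⁆ = 0 := by
  rw [N4.bracket_def]; funext i; fin_cases i <;> (simp [E_apply]; rfl)

/-- the diagonal linear map with entries `a, e, a + e, 2a + e`. -/
noncomputable def diagMap (a e : ℝ) : N4 →ₗ[ℝ] N4 where
  toFun x := fun i => ![a, e, a + e, 2 * a + e] i * x i
  map_add' x y := by
    funext i
    show _ = ![a, e, a + e, 2 * a + e] i * x i + ![a, e, a + e, 2 * a + e] i * y i
    simp [N4.add_apply]; ring
  map_smul' r x := by
    funext i
    show _ = r * (![a, e, a + e, 2 * a + e] i * x i)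
    simp [N4.smul_apply]; ring

lemma diagMap_apply (a e : ℝ) (x : N4) (i : Fin 4) :
    diagMap a e x i = ![a, e, a + e, 2 * a + e] i * x i := rfl

/-- the diagonal derivation of `n₄` with eigenvalues `a, e, a + e, 2a + e`. -/
noncomputable def diagDer (a e : ℝ) : LieDerivation ℝ N4 N4 :=
  { diagMap a e with
    leibniz' := fun x y => by
      show diagMap a e ⁅x, y⁆ = ⁅x, diagMap a e y⁆ - ⁅y, diagMap a e x⁆
      funext i
      rw [N4.sub_apply, diagMap_apply]
      simp only [diagMap_apply, N4.bracket_def]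
      fin_cases i <;> simp [diagMap_apply] <;> ring }

/-- A monic real polynomial `f` of degree 4 is the characteristic polynomial of some
derivation of the filiform Lie algebra `n₄` if and only if
`f = (X - a) * (X - e) * (X - (a + e)) * (X - (2a + e))` for some real numbers `a` and `e`. -/
theorem charpoly_derivation_n4_iff (f : Polynomial ℝ) (hf : f.Monic)
    (hdeg : f.natDegree = 4) :
    (∃ D : LieDerivation ℝ N4 N4, LinearMap.charpoly D.toLinearMap = f) ↔
      ∃ a e : ℝ,
        f = (X - C a) * (X - C e) * (X - C (a + e)) * (X - C (2 * a + e)) := by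
  constructor
  · rintro ⟨D, rfl⟩
    set g := D.toLinearMap with hg
    set M := LinearMap.toMatrix N4basis N4basis g with hMdef
    have hM : ∀ i j : Fin 4, M i j = g (E j) i := by
      intro i j
      rw [hMdef, LinearMap.toMatrix_apply, N4basis]
      erw [Pi.basisFun_repr, Pi.basisFun_apply]
      rfl
    have h1' := D.apply_lie_eq_add (E 0) (E 1)
    have h2' := D.apply_lie_eq_add (E 0) (E 2)
    have h3' := D.apply_lie_eq_add (E 1) (E 2)
    rw [N4.single_bracket01, N4.bracket_def, N4.bracket_def] at h1'
    rw [N4.single_bracket02, N4.bracket_def, N4.bracket_def] at h2'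
    rw [N4.single_bracket12, N4.bracket_def, N4.bracket_def, map_zero] at h3'
    have h02 : M 0 2 = 0 := by
      rw [hM]; have := congrFun h1' 0; change _ = (_ : Fin 4 → ℝ) _ + (_ : Fin 4 → ℝ) _ at this; simpa [N4.add_apply, E_apply, hg, LieDerivation.coeFn_coe] using this
    have h12 : M 1 2 = 0 := by
      rw [hM]; have := congrFun h1' 1; change _ = (_ : Fin 4 → ℝ) _ + (_ : Fin 4 → ℝ) _ at this; simpa [N4.add_apply, E_apply, hg, LieDerivation.coeFn_coe] using this
    have hd2 : M 2 2 = M 0 0 + M 1 1 := by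
      rw [hM, hM, hM]; have := congrFun h1' 2
      change _ = (_ : Fin 4 → ℝ) _ + (_ : Fin 4 → ℝ) _ at this
      simp [N4.add_apply, E_apply] at this
      simp only [hg, LieDerivation.coeFn_coe]
      rw [this]; ring
    have h03 : M 0 3 = 0 := by
      rw [hM]; have := congrFun h2' 0; change _ = (_ : Fin 4 → ℝ) _ + (_ : Fin 4 → ℝ) _ at this; simpa [N4.add_apply, E_apply, hg, LieDerivation.coeFn_coe] using this
    have h13 : M 1 3 = 0 := by
      rw [hM]; have := congrFun h2' 1; change _ = (_ : Fin 4 → ℝ) _ + (_ : Fin 4 → ℝ) _ at this; simpa [N4.add_apply, E_apply, hg, LieDerivation.coeFn_coe] using this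
    have h23 : M 2 3 = 0 := by
      rw [hM]; have := congrFun h2' 2
      have h12' := h12; rw [hM] at h12'
      change _ = (_ : Fin 4 → ℝ) _ + (_ : Fin 4 → ℝ) _ at this
      simp [N4.add_apply, E_apply] at this
      simp only [hg, LieDerivation.coeFn_coe] at h12' ⊢
      rw [this]; exact h12'
    have hd3 : M 3 3 = 2 * M 0 0 + M 1 1 := by
      rw [hM, hM, hM]; have := congrFun h2' 3
      have h1c := congrFun h1' 2
      change _ = (_ : Fin 4 → ℝ) _ + (_ : Fin 4 → ℝ) _ at this h1c
      simp [N4.add_apply, E_apply] at this h1c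
      simp only [hg, LieDerivation.coeFn_coe]
      rw [this, h1c]; ring
    have h01 : M 0 1 = 0 := by
      rw [hM]; have := congrFun h3' 3
      change (0 : ℝ) = (_ : Fin 4 → ℝ) _ + (_ : Fin 4 → ℝ) _ at this
      simpa [N4.add_apply, E_apply, hg, LieDerivation.coeFn_coe] using this.symm
    refine ⟨M 0 0, M 1 1, ?_⟩
    rw [← g.charpoly_toMatrix N4basis, ← hMdef,
      charpoly_lower M h01 h02 h03 h12 h13 h23, hd2, hd3]
  · rintro ⟨a, e, rfl⟩
    refine ⟨diagDer a e, ?_⟩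
    set g := (diagDer a e).toLinearMap with hg
    have hM : ∀ i j : Fin 4,
        LinearMap.toMatrix N4basis N4basis g i j = ![a, e, a + e, 2 * a + e] i * E j i := by
      intro i j
      rw [LinearMap.toMatrix_apply, N4basis]
      erw [Pi.basisFun_repr, Pi.basisFun_apply]
      rfl
    rw [← g.charpoly_toMatrix N4basis,
      charpoly_lower _ (by simp [hM, E_apply]) (by simp [hM, E_apply])
        (by simp [hM, E_apply]) (by simp [hM, E_apply]) (by simp [hM, E_apply])
        (by simp [hM, E_apply])]
    simp [hM, E_apply]
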